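/- arXiv:2210.00692 — 6 statements merged into one kernel-verified Lean document; each statement's English description precedes it below -/
import Mathlib

section
/- Suppose M = 2 and the grand sum condition grandsum(w) + 2b = 0 holds. Then the shallow CNN log-wavefunction possesses the relabeling symmetry: for every balanced state s, lnψ(Ls) = lnψ(s), where L is the relabeling operator. -/
open Finset

/-- The window preactivation of a shallow CNN with cyclic padding. -/
def preact (N K M : ℕ) [NeZero N] (w : Fin K → Fin M → ℝ) (b : ℝ)
    (s : ZMod N → Fin M) (i : ZMod N) : ℝ :=
  (∑ j : Fin K, w j (s (i + (j.val : ZMod N)))) + b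

/-- The log-wavefunction of a shallow ReLU CNN with cyclic padding. -/
def lnPsi (N K M : ℕ) [NeZero N] (w : Fin K → Fin M → ℝ) (b v : ℝ)
    (s : ZMod N → Fin M) : ℝ :=
  v * ∑ i : ZMod N, max (preact N K M w b s i) 0

/-- A balanced state attains every symbol at exactly `N / M` indices. -/
def IsBalanced (N M : ℕ) [NeZero N] (s : ZMod N → Fin M) : Prop :=
  ∀ a : Fin M, (Finset.univ.filter (fun i : ZMod N => s i = a)).card = N / M

/-- for `M = 2`, under the grand sum condition
`grandsum(w) + 2b = 0`, the shallow CNN log-wavefunction has the relabeling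
symmetry on every balanced state. -/
theorem cnn_relabeling_symmetry
    (N K : ℕ) [NeZero N] (hM : (2 : ℕ) ∣ N) (hK : K ≤ N)
    (w : Fin K → Fin 2 → ℝ) (b v : ℝ)
    (hgs : (∑ j : Fin K, ∑ a : Fin 2, w j a) + 2 * b = 0)
    (s : ZMod N → Fin 2) (hbal : IsBalanced N 2 s) :
    lnPsi N K 2 w b v (fun i => 1 - s i) = lnPsi N K 2 w b v s := by
  -- Step 1: flipping a symbol
  have hflip : ∀ (j : Fin K) (a : Fin 2), w j (1 - a) = (w j 0 + w j 1) - w j a := by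
    intro j a
    fin_cases a <;> simp
  -- Step 2: preactivation negates
  have hpre : ∀ i : ZMod N,
      preact N K 2 w b (fun i => 1 - s i) i = - preact N K 2 w b s i := by
    intro i
    unfold preact
    have h1 : ∑ j : Fin K, w j (1 - s (i + (j.val : ZMod N)))
        = (∑ j : Fin K, (w j 0 + w j 1)) - ∑ j : Fin K, w j (s (i + (j.val : ZMod N))) := by
      rw [← Finset.sum_sub_distrib]
      exact Finset.sum_congr rfl fun j _ => hflip j _
    have h2 : (∑ j : Fin K, (w j 0 + w j 1)) = ∑ j : Fin K, ∑ a : Fin 2, w j a := by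
      simp [Fin.sum_univ_two]
    rw [h1, h2]
    linarith
  -- Step 3: sum of preactivations over all sites is zero
  have hsum : ∑ i : ZMod N, preact N K 2 w b s i = 0 := by
    unfold preact
    rw [Finset.sum_add_distrib, Finset.sum_const, Finset.card_univ, ZMod.card]
    rw [Finset.sum_comm]
    have hshift : ∀ j : Fin K,
        ∑ i : ZMod N, w j (s (i + (j.val : ZMod N))) = ∑ i : ZMod N, w j (s i) :=
      fun j => Fintype.sum_equiv (Equiv.addRight ((j.val : ZMod N))) _ _ (fun i => rfl)
    have hfiber : ∀ j : Fin K,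
        ∑ i : ZMod N, w j (s i) = (N / 2 : ℕ) * (w j 0 + w j 1) := by
      intro j
      rw [← Finset.sum_fiberwise Finset.univ s (fun i => w j (s i))]
      have : ∀ a : Fin 2, ∑ i ∈ Finset.univ.filter (fun i => s i = a), w j (s i)
          = (N / 2 : ℕ) * w j a := by
        intro a
        rw [Finset.sum_congr rfl (fun i hi => by
          rw [(Finset.mem_filter.mp hi).2]), Finset.sum_const, hbal a]
        simp [mul_comm]
      rw [Fin.sum_univ_two, this 0, this 1]
      ring
    rw [Finset.sum_congr rfl fun j _ => (hshift j).trans (hfiber j)]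
    rw [← Finset.mul_sum]
    obtain ⟨m, hm⟩ := hM
    have hNm : (N / 2 : ℕ) = m := by omega
    have hS : (∑ j : Fin K, (w j 0 + w j 1)) = ∑ j : Fin K, ∑ a : Fin 2, w j a := by
      simp [Fin.sum_univ_two]
    have hcast : (N : ℝ) = 2 * m := by exact_mod_cast congrArg Nat.cast hm
    rw [hNm, hS, nsmul_eq_mul, hcast]
    have : (∑ j : Fin K, ∑ a : Fin 2, w j a) = -(2 * b) := by linarith
    rw [this]; ring
  -- Conclude
  unfold lnPsi
  congr 1
  have hmax : ∀ i : ZMod N,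
      max (preact N K 2 w b (fun i => 1 - s i) i) 0
        = max (preact N K 2 w b s i) 0 - preact N K 2 w b s i := by
    intro i
    rw [hpre i]
    rcases le_total (preact N K 2 w b s i) 0 with h | h
    · rw [max_eq_left (by linarith), max_eq_right h]; ring
    · rw [max_eq_right (by linarith), max_eq_left h]; ring
  rw [Finset.sum_congr rfl fun i _ => hmax i, Finset.sum_sub_distrib, hsum]
  ring
end

section
/- Suppose M = 2 and the grand sum condition grandsum(w) + 2b = 0 holds. Let s be a balanced state for which there exists k ∈ ZMod N with (T^k (L s)) = R s, where T is cyclic translation, L is relabeling, and R is reflection. Then lnψ(R s) = lnψ(s). -/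
open Finset

/-- Cyclic translation by `k`. -/
def cycTranslate (N M : ℕ) [NeZero N] (k : ZMod N) (s : ZMod N → Fin M) :
    ZMod N → Fin M :=
  fun i => s (i + k)

/-- Relabeling (label switching) operator for `M = 2`. -/
def relabel (N : ℕ) [NeZero N] (s : ZMod N → Fin 2) : ZMod N → Fin 2 :=
  fun i => 1 - s i

/-- Reflection operator. -/
def reflect (N M : ℕ) [NeZero N] (s : ZMod N → Fin M) : ZMod N → Fin M :=
  fun i => s (-i)

/-- Translation invariance of the log-wavefunction. -/
lemma lnPsi_translate (N K M : ℕ) [NeZero N] (w : Fin K → Fin M → ℝ) (b v : ℝ)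
    (k : ZMod N) (s : ZMod N → Fin M) :
    lnPsi N K M w b v (cycTranslate N M k s) = lnPsi N K M w b v s := by
  unfold lnPsi
  congr 1
  rw [← Equiv.sum_comp (Equiv.addRight k)
    (fun i => max (preact N K M w b s i) 0)]
  refine Finset.sum_congr rfl fun i _ => ?_
  congr 1
  unfold preact cycTranslate
  simp only [Equiv.coe_addRight]
  congr 1
  refine Finset.sum_congr rfl fun j _ => ?_
  congr 1
  ring_nf

/-- Under the grand sum condition, relabeling negates the preactivations. -/
lemma preact_relabel (N K : ℕ) [NeZero N] (w : Fin K → Fin 2 → ℝ) (b : ℝ)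
    (hgs : (∑ j : Fin K, ∑ a : Fin 2, w j a) + 2 * b = 0)
    (s : ZMod N → Fin 2) (i : ZMod N) :
    preact N K 2 w b (relabel N s) i = - preact N K 2 w b s i := by
  have key : ∀ (j : Fin K) (a : Fin 2), w j (1 - a) + w j a = ∑ a' : Fin 2, w j a' := by
    intro j a
    fin_cases a <;> simp [Fin.sum_univ_two] <;> ring
  have : preact N K 2 w b (relabel N s) i + preact N K 2 w b s i = 0 := by
    unfold preact relabel
    have : (∑ j : Fin K, w j (1 - s (i + (j.val : ZMod N))))
        + (∑ j : Fin K, w j (s (i + (j.val : ZMod N))))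
        = ∑ j : Fin K, ∑ a : Fin 2, w j a := by
      rw [← Finset.sum_add_distrib]
      exact Finset.sum_congr rfl fun j _ => key j _
    linarith [hgs, this]
  linarith

/-- For a balanced state, the preactivations sum to zero. -/
lemma sum_preact_eq_zero (N K : ℕ) [NeZero N] (hM : (2 : ℕ) ∣ N)
    (w : Fin K → Fin 2 → ℝ) (b : ℝ)
    (hgs : (∑ j : Fin K, ∑ a : Fin 2, w j a) + 2 * b = 0)
    (s : ZMod N → Fin 2) (hbal : IsBalanced N 2 s) :
    ∑ i : ZMod N, preact N K 2 w b s i = 0 := by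
  have hfib : ∀ f : Fin 2 → ℝ,
      ∑ i : ZMod N, f (s i) = ((N / 2 : ℕ) : ℝ) * (f 0 + f 1) := by
    intro f
    rw [← Finset.sum_fiberwise univ s (fun i => f (s i))]
    have : ∀ a : Fin 2,
        ∑ i ∈ univ.filter (fun i => s i = a), f (s i) = ((N / 2 : ℕ) : ℝ) * f a := by
      intro a
      calc ∑ i ∈ univ.filter (fun i => s i = a), f (s i)
          = ∑ _i ∈ univ.filter (fun i => s i = a), f a :=
            Finset.sum_congr rfl (fun i hi => by
              rw [(Finset.mem_filter.mp hi).2])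
        _ = ((N / 2 : ℕ) : ℝ) * f a := by
            rw [Finset.sum_const, hbal a, nsmul_eq_mul]
    rw [Fin.sum_univ_two, this 0, this 1]
    ring
  unfold preact
  rw [Finset.sum_add_distrib, Finset.sum_const, Finset.card_univ, ZMod.card,
    Finset.sum_comm]
  have hswap : ∀ j : Fin K,
      ∑ i : ZMod N, w j (s (i + (j.val : ZMod N))) = ∑ i : ZMod N, w j (s i) := by
    intro j
    exact Equiv.sum_comp (Equiv.addRight ((j.val : ZMod N))) (fun i => w j (s i))
  rw [Finset.sum_congr rfl (fun j _ => by rw [hswap j, hfib (w j)])]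
  rw [← Finset.mul_sum]
  have hgs' : ∑ j : Fin K, (w j 0 + w j 1) = -(2 * b) := by
    have : ∑ j : Fin K, ∑ a : Fin 2, w j a = ∑ j : Fin K, (w j 0 + w j 1) :=
      Finset.sum_congr rfl fun j _ => Fin.sum_univ_two _
    linarith [hgs, this]
  rw [hgs']
  have hN : ((N / 2 : ℕ) : ℝ) * 2 = N := by
    exact_mod_cast congrArg (Nat.cast : ℕ → ℝ) (Nat.div_mul_cancel hM)
  rw [nsmul_eq_mul, ← hN]
  ring

/-- Relabeling invariance of the log-wavefunction on balanced states. -/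
lemma lnPsi_relabel (N K : ℕ) [NeZero N] (hM : (2 : ℕ) ∣ N)
    (w : Fin K → Fin 2 → ℝ) (b v : ℝ)
    (hgs : (∑ j : Fin K, ∑ a : Fin 2, w j a) + 2 * b = 0)
    (s : ZMod N → Fin 2) (hbal : IsBalanced N 2 s) :
    lnPsi N K 2 w b v (relabel N s) = lnPsi N K 2 w b v s := by
  have hmax : ∀ x : ℝ, max (-x) 0 = max x 0 - x := by
    intro x
    rcases le_total x 0 with h | h
    · rw [max_eq_left (neg_nonneg.2 h), max_eq_right h]; ring
    · rw [max_eq_right (neg_nonpos.2 h), max_eq_left h]; ring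
  unfold lnPsi
  congr 1
  calc ∑ i : ZMod N, max (preact N K 2 w b (relabel N s) i) 0
      = ∑ i : ZMod N, (max (preact N K 2 w b s i) 0 - preact N K 2 w b s i) := by
        refine Finset.sum_congr rfl fun i _ => ?_
        rw [preact_relabel N K w b hgs s i, hmax]
    _ = ∑ i : ZMod N, max (preact N K 2 w b s i) 0 := by
        rw [Finset.sum_sub_distrib, sum_preact_eq_zero N K hM w b hgs s hbal,
          sub_zero]

/-- for `M = 2`, under the grand sum condition, any balanced
state whose reflection is a cycTranslate of its relabeling has the reflection
symmetry of the CNN log-wavefunction. -/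
theorem cnn_reflection_symmetry
    (N K : ℕ) [NeZero N] (hM : (2 : ℕ) ∣ N) (hK : K ≤ N)
    (w : Fin K → Fin 2 → ℝ) (b v : ℝ)
    (hgs : (∑ j : Fin K, ∑ a : Fin 2, w j a) + 2 * b = 0)
    (s : ZMod N → Fin 2) (hbal : IsBalanced N 2 s)
    (hrefl : ∃ k : ZMod N, cycTranslate N 2 k (relabel N s) = reflect N 2 s) :
    lnPsi N K 2 w b v (reflect N 2 s) = lnPsi N K 2 w b v s := by
  obtain ⟨k, hk⟩ := hrefl
  rw [← hk, lnPsi_translate, lnPsi_relabel N K hM w b v hgs s hbal]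
end

section
/- If the shallow CNN uses a linear (identity) activation function, then its output is the same constant on every balanced input state: for every balanced state s : ZMod N → Fin M, v · ∑_{i ∈ ZMod N} p_i(s) = v · N · (grandsum(w) / M + b), a value independent of s. -/
open Finset

/-- The grand sum of a convolutional filter. -/
def grandSum (K M : ℕ) (w : Fin K → Fin M → ℝ) : ℝ :=
  ∑ j : Fin K, ∑ a : Fin M, w j a

/-- a shallow CNN with linear (identity) activation outputs the
constant `v · N · (grandsum(w) / M + b)` on every balanced state. -/
theorem cnn_linear_activation_constant
    (N K M : ℕ) [NeZero N] (hM : 0 < M) (hMN : M ∣ N) (hK : K ≤ N)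
    (w : Fin K → Fin M → ℝ) (b v : ℝ)
    (s : ZMod N → Fin M) (hbal : IsBalanced N M s) :
    v * (∑ i : ZMod N, preact N K M w b s i)
      = v * (N : ℝ) * (grandSum K M w / (M : ℝ) + b) := by
  have hcast : ((N / M : ℕ) : ℝ) = (N : ℝ) / (M : ℝ) := by
    rw [Nat.cast_div hMN (by exact_mod_cast hM.ne')]
  have hfib : ∀ f : Fin M → ℝ, ∑ i : ZMod N, f (s i) = ∑ a : Fin M, ((N / M : ℕ) : ℝ) * f a := by
    intro f
    rw [← Finset.sum_fiberwise_of_maps_to (fun i _ => Finset.mem_univ (s i)) (fun i => f (s i))]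
    refine Finset.sum_congr rfl fun a _ => ?_
    rw [Finset.sum_congr rfl (fun i hi => by
      rw [(Finset.mem_filter.mp hi).2]), Finset.sum_const, hbal a, nsmul_eq_mul]
  have key : ∑ i : ZMod N, ∑ j : Fin K, w j (s (i + (j.val : ZMod N)))
      = (N : ℝ) / (M : ℝ) * grandSum K M w := by
    rw [Finset.sum_comm]
    have : ∀ j : Fin K, ∑ i : ZMod N, w j (s (i + (j.val : ZMod N)))
        = ∑ i : ZMod N, w j (s i) := fun j =>
      Fintype.sum_equiv (Equiv.addRight ((j.val : ZMod N))) _ _ (fun i => rfl)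
    simp_rw [this, hfib]
    rw [grandSum, Finset.mul_sum, hcast]
    refine Finset.sum_congr rfl fun j _ => ?_
    rw [Finset.mul_sum]
  simp only [preact, Finset.sum_add_distrib, key, Finset.sum_const, Finset.card_univ,
    ZMod.card, nsmul_eq_mul]
  ring
end

section
/- The CNN log-wavefunction admits a motif-count decomposition: for every state s : ZMod N → Fin M, lnψ(s) = v · ∑_{m' : Fin K → Fin M} max(q(m'), 0) · m_{m'}(s), where the sum ranges over all M^K K-motifs, q(m') is the motif preactivation, and m_{m'}(s) is the number of cyclic occurrences of motif m' in s. -/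
open Finset

/-- The number of cyclic occurrences of the `K`-motif `m'` in the state `s`. -/
def motifCount (N K M : ℕ) [NeZero N] (m' : Fin K → Fin M)
    (s : ZMod N → Fin M) : ℕ :=
  (Finset.univ.filter
    (fun i : ZMod N => ∀ j : Fin K, s (i + (j.val : ZMod N)) = m' j)).card

/-- The motif preactivation of a `K`-motif. -/
def motifPreact (K M : ℕ) (w : Fin K → Fin M → ℝ) (b : ℝ)
    (m' : Fin K → Fin M) : ℝ :=
  (∑ j : Fin K, w j (m' j)) + b

/-- the CNN log-wavefunction decomposes over motif counts. -/
theorem cnn_motif_decomposition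
    (N K M : ℕ) [NeZero N] (hM : 0 < M) (hMN : M ∣ N) (hK : K ≤ N)
    (w : Fin K → Fin M → ℝ) (b v : ℝ) (s : ZMod N → Fin M) :
    lnPsi N K M w b v s
      = v * ∑ m' : Fin K → Fin M,
          max (motifPreact K M w b m') 0 * (motifCount N K M m' s : ℝ) := by
  unfold lnPsi motifCount motifPreact
  congr 1
  rw [← Finset.sum_fiberwise (univ : Finset (ZMod N))
    (fun i => fun j : Fin K => s (i + (j.val : ZMod N)))
    (fun i => max (preact N K M w b s i) 0)]
  refine Finset.sum_congr rfl fun m' _ => ?_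
  rw [Finset.sum_filter]
  rw [Finset.card_filter, Nat.cast_sum, Finset.mul_sum]
  refine Finset.sum_congr rfl fun i _ => ?_
  by_cases h : ∀ j : Fin K, s (i + (j.val : ZMod N)) = m' j
  · have h2 : (fun j : Fin K => s (i + (j.val : ZMod N))) = m' := funext h
    have h3 : preact N K M w b s i = (∑ j : Fin K, w j (m' j)) + b := by
      unfold preact
      congr 1
      exact Finset.sum_congr rfl fun j _ => by rw [h j]
    simp [h, h2, h3]
  · have h2 : (fun j : Fin K => s (i + (j.val : ZMod N))) ≠ m' := by
      simpa [funext_iff] using h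
    simp [h, h2]
end

section
/- The CNN wavefunction is a correlator product state over motifs: for every state s : ZMod N → Fin M, exp(lnψ(s)) = ∏_{m' : Fin K → Fin M} φ(m')^{m_{m'}(s)}, where the correlator parameters are φ(m') = exp(v · max(q(m'), 0)) and m_{m'}(s) is the number of cyclic occurrences of motif m' in s. -/
open Finset

/-- the CNN wavefunction is a correlator product state over
motifs, with correlator parameters `φ(m') = exp(v · max(q(m'), 0))`. -/
theorem cnn_is_correlator_product_state
    (N K M : ℕ) [NeZero N] (hM : 0 < M) (hMN : M ∣ N) (hK : K ≤ N)
    (w : Fin K → Fin M → ℝ) (b v : ℝ) (s : ZMod N → Fin M) :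
    Real.exp (lnPsi N K M w b v s)
      = ∏ m' : Fin K → Fin M,
          (Real.exp (v * max (motifPreact K M w b m') 0))
            ^ (motifCount N K M m' s) := by
  have key : ∑ i : ZMod N, max (preact N K M w b s i) 0
      = ∑ m' : Fin K → Fin M,
          (motifCount N K M m' s : ℝ) * max (motifPreact K M w b m') 0 := by
    rw [← Finset.sum_fiberwise (g := fun i : ZMod N => fun j : Fin K =>
      s (i + (j.val : ZMod N))) (f := fun i => max (preact N K M w b s i) 0) univ]
    refine Finset.sum_congr rfl (fun m' _ => ?_)
    rw [motifCount]
    have hfilter : Finset.univ.filter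
        (fun i : ZMod N => (fun j : Fin K => s (i + (j.val : ZMod N))) = m')
        = Finset.univ.filter
          (fun i : ZMod N => ∀ j : Fin K, s (i + (j.val : ZMod N)) = m' j) := by
      apply Finset.filter_congr
      intro i _
      simp [funext_iff]
    rw [← hfilter, Finset.card_filter]
    push_cast
    rw [Finset.sum_mul, Finset.sum_filter]
    refine Finset.sum_congr rfl (fun i _ => ?_)
    by_cases h : (fun j : Fin K => s (i + (j.val : ZMod N))) = m'
    · simp only [h, if_true, one_mul]
      congr 1
      rw [preact, motifPreact]
      congr 1
      exact Finset.sum_congr rfl (fun j _ => by rw [← h])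
    · simp [h]
  rw [lnPsi, key, Finset.mul_sum, Real.exp_sum]
  refine Finset.prod_congr rfl (fun m' _ => ?_)
  rw [← Real.exp_nat_mul]
  ring_nf
end

section
/- Motif-count ambiguity for small kernels (the construction showing K* > K for K < N/3): let K ≥ 1, let A be a word of length K − 1 over the alphabet Fin M, and let x, y, z be nonempty words over Fin M such that the total length of the cyclic concatenations equals N, i.e. 3(K−1) + |x| + |y| + |z| = N. Then the two cyclic states s₁ = A·x·A·y·A·z and s₂ = A·y·A·x·A·z (read cyclically around ZMod N) have identical K-motif count vectors: m_{m'}(s₁) = m_{m'}(s₂) for every K-motif m' : Fin K → Fin M. -/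
open Finset

/-- The cyclic state determined by a list of length `N`. -/
def listToState (N M : ℕ) [NeZero N] (l : List (Fin M)) (hl : l.length = N) :
    ZMod N → Fin M :=
  fun i => l.get ⟨i.val, by rw [hl]; exact ZMod.val_lt i⟩

/-- Piecewise shift on positions. -/
def sigmaNat (a lx ly i : ℕ) : ℕ :=
  if i < a + lx then i + (a + ly)
  else if i < 2 * a + lx + ly then i - (a + lx)
  else i

lemma sigmaNat_lt {a lx ly lz N i : ℕ} (hz : 0 < lz)
    (hN : 3 * a + lx + ly + lz = N) (hi : i < N) : sigmaNat a lx ly i < N := by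
  simp only [sigmaNat]; split_ifs <;> omega

lemma sigmaNat_inv {a lx ly i : ℕ} :
    sigmaNat a ly lx (sigmaNat a lx ly i) = i := by
  simp only [sigmaNat]; split_ifs <;> omega

lemma key_window {N M : ℕ} (A x y z : List (Fin M))
    (hx : 0 < x.length) (hy : 0 < y.length) (hz : 0 < z.length)
    (hN : 3 * A.length + x.length + y.length + z.length = N)
    (i t : ℕ) (hi : i < N) (ht : t ≤ A.length) :
    (A ++ x ++ A ++ y ++ A ++ z)[(i + t) % N]? =
    (A ++ y ++ A ++ x ++ A ++ z)[(sigmaNat A.length x.length y.length i + t) % N]? := by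
  by_cases c1 : i < A.length + x.length
  · have hs : sigmaNat A.length x.length y.length i = i + (A.length + y.length) := by
      simp only [sigmaNat]; rw [if_pos c1]
    rw [hs, Nat.mod_eq_of_lt (show i + t < N by omega),
        Nat.mod_eq_of_lt (show i + (A.length + y.length) + t < N by omega),
        show A ++ x ++ A ++ y ++ A ++ z = (A ++ x ++ A) ++ (y ++ A ++ z) from by simp,
        show A ++ y ++ A ++ x ++ A ++ z = (A ++ y) ++ ((A ++ x ++ A) ++ z) from by simp,
        List.getElem?_append_left
          (show i + t < (A ++ x ++ A).length from by
            simp only [List.length_append]; omega),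
        List.getElem?_append_right
          (show (A ++ y).length ≤ i + (A.length + y.length) + t from by
            simp only [List.length_append]; omega),
        List.getElem?_append_left
          (show i + (A.length + y.length) + t - (A ++ y).length < (A ++ x ++ A).length from by
            simp only [List.length_append]; omega)]
    congr 1
    simp only [List.length_append]; omega
  · by_cases c2 : i < 2 * A.length + x.length + y.length
    · have hs : sigmaNat A.length x.length y.length i = i - (A.length + x.length) := by
        simp only [sigmaNat]; rw [if_neg c1, if_pos c2]
      rw [hs, Nat.mod_eq_of_lt (show i + t < N by omega),
          Nat.mod_eq_of_lt (show i - (A.length + x.length) + t < N by omega),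
          show A ++ x ++ A ++ y ++ A ++ z = (A ++ x) ++ ((A ++ y ++ A) ++ z) from by simp,
          show A ++ y ++ A ++ x ++ A ++ z = (A ++ y ++ A) ++ (x ++ A ++ z) from by simp,
          List.getElem?_append_right
            (show (A ++ x).length ≤ i + t from by
              simp only [List.length_append]; omega),
          List.getElem?_append_left
            (show i + t - (A ++ x).length < (A ++ y ++ A).length from by
              simp only [List.length_append]; omega),
          List.getElem?_append_left
            (show i - (A.length + x.length) + t < (A ++ y ++ A).length from by
              simp only [List.length_append]; omega)]
      congr 1
      simp only [List.length_append]; omega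
    · have hs : sigmaNat A.length x.length y.length i = i := by
        simp only [sigmaNat]; rw [if_neg c1, if_neg c2]
      rw [hs]
      by_cases c3 : i + t < N
      · rw [Nat.mod_eq_of_lt c3,
            show A ++ x ++ A ++ y ++ A ++ z = (A ++ x ++ A ++ y) ++ (A ++ z) from by simp,
            show A ++ y ++ A ++ x ++ A ++ z = (A ++ y ++ A ++ x) ++ (A ++ z) from by simp,
            List.getElem?_append_right
              (show (A ++ x ++ A ++ y).length ≤ i + t from by
                simp only [List.length_append]; omega),
            List.getElem?_append_right
              (show (A ++ y ++ A ++ x).length ≤ i + t from by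
                simp only [List.length_append]; omega)]
        congr 1
        simp only [List.length_append]; omega
      · rw [Nat.mod_eq_sub_mod (by omega),
            Nat.mod_eq_of_lt (show i + t - N < N by omega),
            show A ++ x ++ A ++ y ++ A ++ z = A ++ (x ++ A ++ y ++ A ++ z) from by simp,
            show A ++ y ++ A ++ x ++ A ++ z = A ++ (y ++ A ++ x ++ A ++ z) from by simp,
            List.getElem?_append_left (show i + t - N < A.length by omega),
            List.getElem?_append_left (show i + t - N < A.length by omega)]

/-- if `A` is a word of length `K − 1` and `x, y, z` are
nonempty words with `3(K−1) + |x| + |y| + |z| = N`, then the cyclic states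
`A·x·A·y·A·z` and `A·y·A·x·A·z` have identical `K`-motif count vectors. -/
theorem motif_count_ambiguity
    (N M K : ℕ) [NeZero N] (hK : 1 ≤ K) (hKN : K ≤ N)
    (A x y z : List (Fin M))
    (hA : A.length = K - 1)
    (hx : x ≠ []) (hy : y ≠ []) (hz : z ≠ [])
    (hlen : 3 * (K - 1) + x.length + y.length + z.length = N)
    (h1 : (A ++ x ++ A ++ y ++ A ++ z).length = N)
    (h2 : (A ++ y ++ A ++ x ++ A ++ z).length = N)
    (m' : Fin K → Fin M) :
    motifCount N K M m' (listToState N M (A ++ x ++ A ++ y ++ A ++ z) h1)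
      = motifCount N K M m' (listToState N M (A ++ y ++ A ++ x ++ A ++ z) h2) := by
  have hNpos : 0 < N := Nat.pos_of_ne_zero (NeZero.ne N)
  have hx' : 0 < x.length := List.length_pos_iff.mpr hx
  have hy' : 0 < y.length := List.length_pos_iff.mpr hy
  have hz' : 0 < z.length := List.length_pos_iff.mpr hz
  have hN : 3 * A.length + x.length + y.length + z.length = N := by rw [hA]; exact hlen
  have hN' : 3 * A.length + y.length + x.length + z.length = N := by omega
  set σ : ZMod N → ZMod N :=
    fun i => ((sigmaNat A.length x.length y.length i.val : ℕ) : ZMod N) with hσ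
  set τ : ZMod N → ZMod N :=
    fun i => ((sigmaNat A.length y.length x.length i.val : ℕ) : ZMod N) with hτ
  have hval : ∀ (i : ZMod N) (c : ℕ), c < N →
      (i + (c : ZMod N)).val = (i.val + c) % N := by
    intro i c hc
    rw [ZMod.val_add, ZMod.val_natCast_of_lt hc]
  have hj : ∀ j : Fin K, (j.val : ℕ) < N := fun j => lt_of_lt_of_le j.isLt hKN
  -- window transfer, generic
  have main : ∀ (A' x' y' z' : List (Fin M)) (hx' : 0 < x'.length)
      (hy' : 0 < y'.length) (hz' : 0 < z'.length)
      (hN'' : 3 * A'.length + x'.length + y'.length + z'.length = N)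
      (h1' : (A' ++ x' ++ A' ++ y' ++ A' ++ z').length = N)
      (h2' : (A' ++ y' ++ A' ++ x' ++ A' ++ z').length = N)
      (hA' : A'.length = K - 1)
      (i : ZMod N) (j : Fin K),
      listToState N M (A' ++ x' ++ A' ++ y' ++ A' ++ z') h1' (i + (j.val : ZMod N)) =
      listToState N M (A' ++ y' ++ A' ++ x' ++ A' ++ z') h2'
        (((sigmaNat A'.length x'.length y'.length i.val : ℕ) : ZMod N) + (j.val : ZMod N)) := by
    intro A' x' y' z' hx' hy' hz' hN'' h1' h2' hA' i j
    have hsl : sigmaNat A'.length x'.length y'.length i.val < N :=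
      sigmaNat_lt hz' hN'' i.val_lt
    have hv1 : (i + (j.val : ZMod N)).val = (i.val + j.val) % N := hval i j.val (hj j)
    have hv2 : (((sigmaNat A'.length x'.length y'.length i.val : ℕ) : ZMod N)
        + (j.val : ZMod N)).val
        = (sigmaNat A'.length x'.length y'.length i.val + j.val) % N := by
      rw [hval _ _ (hj j), ZMod.val_natCast_of_lt hsl]
    have hja' : (j.val : ℕ) ≤ A'.length := by rw [hA']; omega
    simp only [listToState, List.get_eq_getElem]
    apply Option.some.inj
    rw [← List.getElem?_eq_getElem, ← List.getElem?_eq_getElem, hv1, hv2]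
    exact key_window A' x' y' z' hx' hy' hz' hN'' i.val j.val i.val_lt hja'
  unfold motifCount
  apply Finset.card_bij' (fun i _ => σ i) (fun i _ => τ i)
  · intro i hi
    simp only [Finset.mem_filter, Finset.mem_univ, true_and] at hi ⊢
    intro j
    rw [← main A x y z hx' hy' hz' hN h1 h2 hA i j]
    exact hi j
  · intro i hi
    simp only [Finset.mem_filter, Finset.mem_univ, true_and] at hi ⊢
    intro j
    rw [← main A y x z hy' hx' hz' hN' h2 h1 hA i j]
    exact hi j
  · intro i _
    show τ (σ i) = i
    simp only [hσ, hτ]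
    rw [ZMod.val_natCast_of_lt (sigmaNat_lt hz' hN i.val_lt), sigmaNat_inv]
    exact ZMod.natCast_rightInverse i
  · intro i _
    show σ (τ i) = i
    simp only [hσ, hτ]
    rw [ZMod.val_natCast_of_lt (sigmaNat_lt hz' hN' i.val_lt), sigmaNat_inv]
    exact ZMod.natCast_rightInverse i
end
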